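/- Let 𝒪 ⊆ ℕ² be a finite nonempty order ideal. Then the formal power series Ind_𝒪(y_1, y_2) = Σ_{α ∈ ℕ²} ind_𝒪(α) y_1^{α_1} y_2^{α_2} ∈ ℚ[[y_1, y_2]], multiplied by (1 − y_1)²(1 − y_2)², is a polynomial; i.e. Ind_𝒪 is a rational function with denominator dividing (1 − y_1)²(1 − y_2)². -/

import Mathlib

/-- An order ideal in ℕ^n: a set of exponent vectors closed under componentwise division. -/
def IsOrderIdeal {n : ℕ} (O : Set (Fin n →₀ ℕ)) : Prop :=
  ∀ α ∈ O, ∀ β : Fin n →₀ ℕ, β ≤ α → β ∈ O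

/-- The border of a set `C ⊆ ℕ^n`: `∂C = {α + e_i : α ∈ C, i} \ C`. -/
def border {n : ℕ} (C : Set (Fin n →₀ ℕ)) : Set (Fin n →₀ ℕ) :=
  {γ | ∃ α ∈ C, ∃ i : Fin n, γ = α + Finsupp.single i 1} \ C

/-- The closed higher borders: `∂̄⁰O = O`, `∂̄ᵏO = ∂(∂̄ᵏ⁻¹O) ∪ ∂̄ᵏ⁻¹O`. -/
def closedBorder {n : ℕ} (O : Set (Fin n →₀ ℕ)) : ℕ → Set (Fin n →₀ ℕ)
  | 0 => O
  | k + 1 => border (closedBorder O k) ∪ closedBorder O k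

/-- The higher borders: `∂⁰O = O`, `∂ᵏO = ∂(∂̄ᵏ⁻¹O)`. -/
def borderIter {n : ℕ} (O : Set (Fin n →₀ ℕ)) : ℕ → Set (Fin n →₀ ℕ)
  | 0 => O
  | k + 1 => border (closedBorder O k)

/-- The index of `α` relative to `O`: the minimal `k` with `α ∈ ∂̄ᵏO`. -/
noncomputable def ind {n : ℕ} (O : Set (Fin n →₀ ℕ)) (α : Fin n →₀ ℕ) : ℕ :=
  sInf {k | α ∈ closedBorder O k}

/-- Total degree of an exponent vector. -/
def deg {n : ℕ} (α : Fin n →₀ ℕ) : ℕ := ∑ i, α i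

/-- The multivariate formal power series with prescribed coefficients. -/
noncomputable def seriesOfCoeff {n : ℕ} (f : (Fin n →₀ ℕ) → ℚ) : MvPowerSeries (Fin n) ℚ := f

lemma deg_add {n : ℕ} (a b : Fin n →₀ ℕ) : deg (a + b) = deg a + deg b := by
  simp [deg, Finsupp.add_apply, Finset.sum_add_distrib]

lemma deg_single {n : ℕ} (i : Fin n) : deg (Finsupp.single i 1) = 1 := by
  simp [deg, Finsupp.single_apply]

lemma deg_eq_zero {n : ℕ} {a : Fin n →₀ ℕ} (h : deg a = 0) : a = 0 := by
  ext i
  have := Finset.sum_eq_zero_iff.mp h i (Finset.mem_univ i)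
  simpa using this

lemma border_union {n : ℕ} (C : Set (Fin n →₀ ℕ)) :
    border C ∪ C = C ∪ {γ | ∃ a ∈ C, ∃ i : Fin n, γ = a + Finsupp.single i 1} := by
  ext x
  simp only [border, Set.mem_union, Set.mem_diff, Set.mem_setOf_eq]
  constructor
  · tauto
  · rintro (h | h)
    · exact Or.inr h
    · by_cases hx : x ∈ C
      · exact Or.inr hx
      · exact Or.inl ⟨h, hx⟩

lemma closedBorder_eq {n : ℕ} (O : Set (Fin n →₀ ℕ)) (k : ℕ) :
    closedBorder O k = {α | ∃ β ∈ O, β ≤ α ∧ deg (α - β) ≤ k} := by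
  induction k with
  | zero =>
    ext α
    simp only [closedBorder, Set.mem_setOf_eq, Nat.le_zero]
    constructor
    · intro h; exact ⟨α, h, le_rfl, by simp [deg]⟩
    · rintro ⟨β, hβ, hle, hdeg⟩
      have h0 : α - β = 0 := deg_eq_zero hdeg
      have : α = β := le_antisymm (tsub_eq_zero_iff_le.mp h0) hle
      rwa [this]
  | succ k ih =>
    show border (closedBorder O k) ∪ closedBorder O k = _
    rw [border_union, ih]
    ext α
    simp only [Set.mem_union, Set.mem_setOf_eq]
    constructor
    · rintro (⟨β, hβ, hle, hdeg⟩ | ⟨a, ⟨β, hβ, hle, hdeg⟩, i, rfl⟩)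
      · exact ⟨β, hβ, hle, hdeg.trans (Nat.le_succ k)⟩
      · refine ⟨β, hβ, hle.trans le_self_add, ?_⟩
        rw [← tsub_add_eq_add_tsub hle, deg_add, deg_single]
        omega
    · rintro ⟨β, hβ, hle, hdeg⟩
      by_cases hk : deg (α - β) ≤ k
      · exact Or.inl ⟨β, hβ, hle, hk⟩
      · have hd : deg (α - β) = k + 1 := le_antisymm hdeg (by omega)
        have hne : α - β ≠ 0 := by
          intro h0; rw [h0] at hd; simp [deg] at hd
        obtain ⟨i, hi⟩ : ∃ i, (α - β) i ≠ 0 := by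
          by_contra h; push_neg at h
          exact hne (Finsupp.ext fun i => by simpa using h i)
        have hei : Finsupp.single i 1 ≤ α - β := by
          rw [Finsupp.single_le_iff]; omega
        refine Or.inr ⟨β + ((α - β) - Finsupp.single i 1), ⟨β, hβ, le_self_add, ?_⟩, i, ?_⟩
        · rw [add_tsub_cancel_left]
          have h1 : deg ((α - β) - Finsupp.single i 1) + deg (Finsupp.single i 1)
              = deg (α - β) := by
            rw [← deg_add, tsub_add_cancel_of_le hei]
          rw [deg_single] at h1
          omega
        · rw [add_assoc, tsub_add_cancel_of_le hei, add_tsub_cancel_of_le hle]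

lemma ind_eq {n : ℕ} (O : Set (Fin n →₀ ℕ)) (h0 : (0 : Fin n →₀ ℕ) ∈ O) (α : Fin n →₀ ℕ) :
    ind O α = sInf ((fun β => deg (α - β)) '' {β | β ∈ O ∧ β ≤ α}) := by
  set S : Set ℕ := (fun β => deg (α - β)) '' {β | β ∈ O ∧ β ≤ α} with hS
  have hSne : S.Nonempty := ⟨deg α, 0, ⟨h0, (zero_le : (0 : Fin n →₀ ℕ) ≤ α)⟩, by simp⟩
  obtain ⟨β, ⟨hβO, hβle⟩, hdeg⟩ := Nat.sInf_mem hSne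
  have hne2 : {k | α ∈ closedBorder O k}.Nonempty := by
    refine ⟨deg α, ?_⟩
    simp only [Set.mem_setOf_eq]
    rw [closedBorder_eq]
    exact ⟨0, h0, (zero_le : (0 : Fin n →₀ ℕ) ≤ α), by simp⟩
  apply le_antisymm
  · apply Nat.sInf_le
    rw [Set.mem_setOf_eq, closedBorder_eq]
    exact ⟨β, hβO, hβle, hdeg.le⟩
  · have hmem := Nat.sInf_mem hne2
    rw [Set.mem_setOf_eq, closedBorder_eq] at hmem
    obtain ⟨β', hβ'O, hβ'le, hd⟩ := hmem
    calc sInf S ≤ deg (α - β') := Nat.sInf_le ⟨β', ⟨hβ'O, hβ'le⟩, rfl⟩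
      _ ≤ ind O α := hd

lemma sInf_image_succ {S : Set ℕ} (h : S.Nonempty) :
    sInf ((fun d => d + 1) '' S) = sInf S + 1 := by
  apply le_antisymm
  · exact Nat.sInf_le ⟨sInf S, Nat.sInf_mem h, rfl⟩
  · obtain ⟨d, hd, hdeq⟩ := Nat.sInf_mem (h.image fun d => d + 1)
    rw [← hdeq]
    exact Nat.add_le_add_right (Nat.sInf_le hd) 1

lemma ind_shift {n : ℕ} (O : Set (Fin n →₀ ℕ)) (h0 : (0 : Fin n →₀ ℕ) ∈ O) (N : ℕ)
    (hN : ∀ β ∈ O, ∀ i, β i < N) (i : Fin n) (α : Fin n →₀ ℕ) (hα : N ≤ α i) :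
    ind O (α + Finsupp.single i 1) = ind O α + 1 := by
  rw [ind_eq O h0, ind_eq O h0]
  have hset : {β | β ∈ O ∧ β ≤ α + Finsupp.single i 1} = {β | β ∈ O ∧ β ≤ α} := by
    ext β
    simp only [Set.mem_setOf_eq, and_congr_right_iff]
    intro hβ
    constructor
    · intro h
      rw [Finsupp.le_def] at h ⊢
      intro j
      rcases eq_or_ne j i with rfl | hne
      · have := hN β hβ j; omega
      · have := h j
        simpa [Finsupp.single_apply, hne.symm] using this
    · intro h; exact h.trans le_self_add
  rw [hset]
  have himg : (fun β => deg (α + Finsupp.single i 1 - β)) '' {β | β ∈ O ∧ β ≤ α}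
      = (fun d => d + 1) '' ((fun β => deg (α - β)) '' {β | β ∈ O ∧ β ≤ α}) := by
    rw [Set.image_image]
    apply Set.image_congr
    rintro β ⟨-, hle⟩
    rw [← tsub_add_eq_add_tsub hle, deg_add, deg_single]
  have hne3 : ((fun β => deg (α - β)) '' {β | β ∈ O ∧ β ≤ α}).Nonempty :=
    ⟨deg α, 0, ⟨h0, (zero_le : (0 : Fin n →₀ ℕ) ≤ α)⟩, by simp⟩
  rw [himg, sInf_image_succ hne3]

lemma coeff_seriesOfCoeff {n : ℕ} (f : (Fin n →₀ ℕ) → ℚ) (m : Fin n →₀ ℕ) :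
    MvPowerSeries.coeff m (seriesOfCoeff f) = f m := rfl

lemma coeff_one_sub_X_mul (i : Fin 2) (F : MvPowerSeries (Fin 2) ℚ) (m : Fin 2 →₀ ℕ) :
    MvPowerSeries.coeff m ((1 - MvPowerSeries.X i) * F) =
      MvPowerSeries.coeff m F -
        (if Finsupp.single i 1 ≤ m then MvPowerSeries.coeff (m - Finsupp.single i 1) F
         else 0) := by
  rw [sub_mul, one_mul, map_sub]
  congr 1
  rw [show (MvPowerSeries.X i : MvPowerSeries (Fin 2) ℚ)
      = MvPowerSeries.monomial (Finsupp.single i 1) 1 from rfl,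
    MvPowerSeries.coeff_monomial_mul]
  simp

lemma vanish_mul_one_sub_X {i j : Fin 2} (hij : j ≠ i) (M : ℕ) (K : MvPowerSeries (Fin 2) ℚ)
    (hK : ∀ m : Fin 2 →₀ ℕ, M ≤ m i → MvPowerSeries.coeff m K = 0) :
    ∀ m : Fin 2 →₀ ℕ, M ≤ m i → MvPowerSeries.coeff m ((1 - MvPowerSeries.X j) * K) = 0 := by
  intro m hm
  rw [coeff_one_sub_X_mul, hK m hm]
  split
  · rw [hK]
    · ring
    · rw [Finsupp.tsub_apply]
      simp only [Finsupp.single_apply, if_neg hij]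
      omega
  · ring

/-- For a finite nonempty order ideal `O ⊆ ℕ²`, the generating function
`Ind_O(y₁,y₂) = Σ_α ind_O(α) y^α`, multiplied by `(1-y₁)²(1-y₂)²`, is a polynomial. -/
theorem ind_genFun_dim2_rational (O : Set (Fin 2 →₀ ℕ))
    (hfin : O.Finite) (hne : O.Nonempty) (hO : IsOrderIdeal O) :
    ∃ p : MvPolynomial (Fin 2) ℚ,
      ((1 : MvPowerSeries (Fin 2) ℚ) - MvPowerSeries.X 0) ^ 2 * (1 - MvPowerSeries.X 1) ^ 2 *
        seriesOfCoeff (fun α => (ind O α : ℚ)) = (p : MvPowerSeries (Fin 2) ℚ) := by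
  classical
  obtain ⟨γ, hγ⟩ := hne
  have h0 : (0 : Fin 2 →₀ ℕ) ∈ O := hO γ hγ 0 (zero_le : (0 : Fin 2 →₀ ℕ) ≤ γ)
  set N : ℕ := (hfin.toFinset.sup deg) + 1 with hNdef
  have hN : ∀ β ∈ O, ∀ i, β i < N := by
    intro β hβ i
    have h1 : β i ≤ deg β :=
      Finset.single_le_sum (fun j _ => Nat.zero_le (β j)) (Finset.mem_univ i)
    have h2 : deg β ≤ hfin.toFinset.sup deg := Finset.le_sup (hfin.mem_toFinset.mpr hβ)
    omega
  set S : MvPowerSeries (Fin 2) ℚ := seriesOfCoeff (fun α => (ind O α : ℚ)) with hSdef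
  -- one difference: coefficient of (1-Xᵢ)·S is 1 in the region m i ≥ N+1
  have hG : ∀ (i : Fin 2) (m : Fin 2 →₀ ℕ), N + 1 ≤ m i →
      MvPowerSeries.coeff m ((1 - MvPowerSeries.X i) * S) = 1 := by
    intro i m hm
    have hle : Finsupp.single i 1 ≤ m := Finsupp.single_le_iff.mpr (by omega)
    rw [coeff_one_sub_X_mul, if_pos hle, hSdef, coeff_seriesOfCoeff, coeff_seriesOfCoeff]
    have hNi : N ≤ (m - Finsupp.single i 1 : Fin 2 →₀ ℕ) i := by
      rw [Finsupp.tsub_apply, Finsupp.single_eq_same]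
      omega
    have hsh := ind_shift O h0 N hN i (m - Finsupp.single i 1) hNi
    rw [tsub_add_cancel_of_le hle] at hsh
    rw [hsh]
    push_cast
    ring
  -- two differences: coefficient of (1-Xᵢ)²·S vanishes in the region m i ≥ N+2
  have hH : ∀ (i : Fin 2) (m : Fin 2 →₀ ℕ), N + 2 ≤ m i →
      MvPowerSeries.coeff m ((1 - MvPowerSeries.X i) * ((1 - MvPowerSeries.X i) * S)) = 0 := by
    intro i m hm
    have hle : Finsupp.single i 1 ≤ m := Finsupp.single_le_iff.mpr (by omega)
    have hNi : N + 1 ≤ (m - Finsupp.single i 1 : Fin 2 →₀ ℕ) i := by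
      rw [Finsupp.tsub_apply, Finsupp.single_eq_same]
      omega
    rw [coeff_one_sub_X_mul, if_pos hle, hG i m (by omega), hG i _ hNi]
    ring
  set P : MvPowerSeries (Fin 2) ℚ :=
    ((1 : MvPowerSeries (Fin 2) ℚ) - MvPowerSeries.X 0) ^ 2 * (1 - MvPowerSeries.X 1) ^ 2 * S
    with hPdef
  have hP : ∀ m : Fin 2 →₀ ℕ, N + 2 ≤ m 0 ∨ N + 2 ≤ m 1 →
      MvPowerSeries.coeff m P = 0 := by
    intro m hm
    rcases hm with hm | hm
    · have e0 : P = (1 - MvPowerSeries.X 1) * ((1 - MvPowerSeries.X 1) *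
          ((1 - MvPowerSeries.X 0) * ((1 - MvPowerSeries.X 0) * S))) := by
        rw [hPdef]; ring
      rw [e0]
      exact vanish_mul_one_sub_X (by decide) (N + 2) _
        (vanish_mul_one_sub_X (by decide) (N + 2) _ (hH 0)) m hm
    · have e1 : P = (1 - MvPowerSeries.X 0) * ((1 - MvPowerSeries.X 0) *
          ((1 - MvPowerSeries.X 1) * ((1 - MvPowerSeries.X 1) * S))) := by
        rw [hPdef]; ring
      rw [e1]
      exact vanish_mul_one_sub_X (by decide) (N + 2) _
        (vanish_mul_one_sub_X (by decide) (N + 2) _ (hH 1)) m hm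
  -- the support is contained in a finite box
  set s : Finset (Fin 2 →₀ ℕ) :=
    (Finset.range (N + 2) ×ˢ Finset.range (N + 2)).image
      (fun ab => Finsupp.single 0 ab.1 + Finsupp.single 1 ab.2) with hsdef
  have hmem : ∀ m : Fin 2 →₀ ℕ, m 0 < N + 2 → m 1 < N + 2 → m ∈ s := by
    intro m hm0 hm1
    refine Finset.mem_image.mpr ⟨(m 0, m 1),
      Finset.mem_product.mpr ⟨Finset.mem_range.mpr hm0, Finset.mem_range.mpr hm1⟩, ?_⟩
    ext j
    fin_cases j <;> simp [Finsupp.single_apply]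
  refine ⟨∑ α ∈ s, MvPolynomial.monomial α (MvPowerSeries.coeff α P), ?_⟩
  apply MvPowerSeries.ext
  intro m
  rw [MvPolynomial.coeff_coe, MvPolynomial.coeff_sum]
  simp only [MvPolynomial.coeff_monomial]
  rw [Finset.sum_ite_eq' s m (fun α => MvPowerSeries.coeff α P)]
  by_cases hm : m ∈ s
  · rw [if_pos hm]
  · rw [if_neg hm]
    apply hP
    by_contra h
    push_neg at h
    exact hm (hmem m h.1 h.2)
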